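/- Fix an integer n ≥ 2, set b := -n + i, and let D = {0, m} with 2 ≤ m ≤ n². Let (α_j)_{j≥1} be a sequence with α_j ∈ {0, m, -m} for all j, set α := π((α_j)), and assume the radix expansion of α in base (b, {0, ±m}) is unique: for every sequence (β_j)_{j≥1} with β_j ∈ {0, m, -m} and π((β_j)) = α, one has β_j = α_j for all j. Let γ_j := min(D ∩ (D + α_j)) for each j, γ := π((γ_j)), and C(α) := C_{n,D} ∩ (C_{n,D} + α). Suppose (m − |α_j|)_{j≥1} is strongly eventually periodic with data p ≥ 1, integers a_1, …, a_p and nonnegative integers u_1, …, u_p, i.e., m − |α_ℓ| = a_ℓ for 1 ≤ ℓ ≤ p and m − |α_j| = a_ℓ + u_ℓ whenever j > p and j ≡ ℓ (mod p). Then C(α) = ⋃ f_{y,z}(C(α)), where the union is over all tuples (y_1, …, y_p) and (z_1, …, z_p) with y_ℓ, z_ℓ ∈ {0, m}, y_ℓ ≤ a_ℓ, and z_ℓ ≤ u_ℓ for each ℓ, and f_{y,z}(x) := b^{-p}(x + Σ_{ℓ=1}^p (y_ℓ b^{p−ℓ} + z_ℓ b^{−ℓ}) − γ) + γ. In particular,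 C(α) is self-similar. -/

import Mathlib

open Complex Filter Pointwise

/-- `piSum b d = ∑_{j≥1} d_j b^{-j}` (0-indexed: `d j` is the `(j+1)`-st digit). -/
noncomputable def piSum (b : ℂ) (d : ℕ → ℤ) : ℂ :=
  ∑' j : ℕ, (d j : ℂ) * b ^ (-((j : ℤ) + 1))

/-- The restricted digit set `C_{n,D}`. -/
def restrictedDigitSet (n : ℕ) (D : Set ℤ) : Set ℂ :=
  {z | ∃ d : ℕ → ℤ, (∀ j, d j ∈ D) ∧ z = piSum (-(n : ℂ) + Complex.I) d}

lemma aux_summable {b : ℂ} (hb : 1 < ‖b‖) (d : ℕ → ℤ) (M : ℤ) (hM : ∀ j, |d j| ≤ M) :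
    Summable (fun j : ℕ => (d j : ℂ) * b ^ (-((j : ℤ) + 1))) := by
  have hpow : ∀ j : ℕ, b ^ (-((j : ℤ) + 1)) = b⁻¹ ^ (j + 1) := by
    intro j
    rw [inv_pow, ← zpow_natCast b (j+1), ← zpow_neg]
    norm_num
  have hr0 : (0:ℝ) ≤ ‖b⁻¹‖ := norm_nonneg _
  have hr1 : ‖b⁻¹‖ < 1 := by
    rw [norm_inv]
    exact inv_lt_one_of_one_lt₀ hb
  have hgeo : Summable (fun j : ℕ => ((M:ℝ) * ‖b⁻¹‖) * ‖b⁻¹‖ ^ j) :=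
    (summable_geometric_of_lt_one hr0 hr1).mul_left _
  apply Summable.of_norm_bounded hgeo
  intro j
  rw [hpow, norm_mul, norm_pow]
  have h1 : ‖((d j : ℂ))‖ ≤ (M:ℝ) := by
    rw [Complex.norm_intCast]
    exact_mod_cast hM j
  have h2 : ‖b⁻¹‖ ^ (j+1) = ‖b⁻¹‖ * ‖b⁻¹‖ ^ j := by ring
  rw [h2, ← mul_assoc]
  have h3 := pow_nonneg hr0 j
  exact mul_le_mul_of_nonneg_right (mul_le_mul_of_nonneg_right h1 hr0) h3

lemma piSum_add {b : ℂ} (hb : 1 < ‖b‖) (d e : ℕ → ℤ) (M : ℤ)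
    (hd : ∀ j, |d j| ≤ M) (he : ∀ j, |e j| ≤ M) :
    piSum b (fun j => d j + e j) = piSum b d + piSum b e := by
  unfold piSum
  rw [← Summable.tsum_add (aux_summable hb d M hd) (aux_summable hb e M he)]
  congr 1; funext j; push_cast; ring

lemma piSum_sub {b : ℂ} (hb : 1 < ‖b‖) (d e : ℕ → ℤ) (M : ℤ)
    (hd : ∀ j, |d j| ≤ M) (he : ∀ j, |e j| ≤ M) :
    piSum b (fun j => d j - e j) = piSum b d - piSum b e := by
  unfold piSum
  rw [← Summable.tsum_sub (aux_summable hb d M hd) (aux_summable hb e M he)]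
  congr 1; funext j; push_cast; ring

lemma piSum_finsupp {b : ℂ} (d : ℕ → ℤ) (p : ℕ) (h : ∀ j, p ≤ j → d j = 0) :
    piSum b d = ∑ j ∈ Finset.range p, (d j : ℂ) * b ^ (-((j : ℤ) + 1)) := by
  unfold piSum
  apply tsum_eq_sum
  intro j hj
  simp only [Finset.mem_range, not_lt] at hj
  rw [h j hj]
  simp

lemma piSum_shift {b : ℂ} (hb : 1 < ‖b‖) (d : ℕ → ℤ) (M : ℤ) (hd : ∀ j, |d j| ≤ M) (p : ℕ) :
    piSum b d = (∑ j ∈ Finset.range p, (d j : ℂ) * b ^ (-((j : ℤ) + 1)))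
      + b ^ (-(p : ℤ)) * piSum b (fun j => d (j + p)) := by
  have hb0 : b ≠ 0 := by intro h; rw [h, norm_zero] at hb; linarith
  have hsum := aux_summable hb d M hd
  unfold piSum
  rw [← Summable.sum_add_tsum_nat_add p hsum]
  congr 1
  rw [← tsum_mul_left]
  congr 1; funext j
  rw [← mul_assoc, mul_comm (b ^ (-(p:ℤ))), mul_assoc, ← zpow_add₀ hb0]
  congr 2
  push_cast
  ring

lemma norm_base (n : ℕ) (hn : 1 ≤ n) : 1 < ‖-(n : ℂ) + Complex.I‖ := by
  have h : ‖-(n : ℂ) + Complex.I‖ ^ 2 = (n:ℝ)^2 + 1 := by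
    rw [Complex.sq_norm, Complex.normSq_apply]
    simp
    ring
  have hn1 : (1:ℝ) ≤ (n:ℝ) := by exact_mod_cast hn
  nlinarith [norm_nonneg (-(n : ℂ) + Complex.I)]

lemma mem_inter_iff_arith (m : ℤ) (t d : ℤ) :
    (d ∈ ({0, m} : Set ℤ) ∩ (({0, m} : Set ℤ) + {t})) ↔
      ((d = 0 ∨ d = m) ∧ (d - t = 0 ∨ d - t = m)) := by
  simp only [Set.mem_inter_iff, Set.mem_insert_iff, Set.mem_singleton_iff, Set.mem_add]
  constructor
  · rintro ⟨h1, x, hx, s, rfl, rfl⟩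
    exact ⟨h1, by omega⟩
  · rintro ⟨h1, h2⟩
    exact ⟨h1, d - t, by omega, t, rfl, by ring⟩

lemma hkey_lemma (m : ℤ) (hm2 : 2 ≤ m) (α γ : ℕ → ℤ)
    (hα : ∀ j, α j ∈ ({0, m, -m} : Set ℤ))
    (hγ : ∀ j, IsLeast (({0, m} : Set ℤ) ∩ (({0, m} : Set ℤ) + {α j})) (γ j)) :
    ∀ (j : ℕ) (d : ℤ), ((d = 0 ∨ d = m) ∧ (d - α j = 0 ∨ d - α j = m)) ↔
      (d - γ j = 0 ∨ d - γ j = m - |α j|) := by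
  intro j d
  have h1 := (hγ j).1
  rw [mem_inter_iff_arith] at h1
  have hlb : ∀ x : ℤ, ((x = 0 ∨ x = m) ∧ (x - α j = 0 ∨ x - α j = m)) → γ j ≤ x :=
    fun x hx => (hγ j).2 ((mem_inter_iff_arith m (α j) x).mpr hx)
  have hαj := hα j
  simp only [Set.mem_insert_iff, Set.mem_singleton_iff] at hαj
  rcases hαj with h | h | h
  · have ha : |α j| = 0 := by rw [h]; simp
    have h0 := hlb 0 ⟨Or.inl rfl, by omega⟩
    rw [ha, h]
    rw [h] at h1
    omega
  · have ha : |α j| = m := by rw [h]; exact abs_of_nonneg (by omega)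
    rw [ha, h]
    rw [h] at h1
    omega
  · have ha : |α j| = m := by rw [h]; rw [abs_neg]; exact abs_of_nonneg (by omega)
    rw [ha, h]
    rw [h] at h1
    omega
lemma char_lemma (n : ℕ) (hn : 2 ≤ n) (m : ℤ) (hm2 : 2 ≤ m)
    (α : ℕ → ℤ) (hα : ∀ j, α j ∈ ({0, m, -m} : Set ℤ))
    (huniq : ∀ β : ℕ → ℤ, (∀ j, β j ∈ ({0, m, -m} : Set ℤ)) →
      piSum (-(n : ℂ) + Complex.I) β = piSum (-(n : ℂ) + Complex.I) α →
      ∀ j, β j = α j)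
    (γ : ℕ → ℤ)
    (hγ : ∀ j, IsLeast (({0, m} : Set ℤ) ∩ (({0, m} : Set ℤ) + {α j})) (γ j)) :
    restrictedDigitSet n {0, m} ∩
        (restrictedDigitSet n {0, m} + {piSum (-(n : ℂ) + Complex.I) α})
      = {x | ∃ c : ℕ → ℤ, (∀ j, c j = 0 ∨ c j = m - |α j|) ∧
          x = piSum (-(n : ℂ) + Complex.I) γ + piSum (-(n : ℂ) + Complex.I) c} := by
  have hb : 1 < ‖-(n : ℂ) + Complex.I‖ := norm_base n (by omega)
  set b : ℂ := -(n : ℂ) + Complex.I with hbdef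
  have habsα : ∀ j, |α j| = 0 ∨ |α j| = m := by
    intro j
    have := hα j
    simp only [Set.mem_insert_iff, Set.mem_singleton_iff] at this
    rcases this with h | h | h <;> rw [h]
    · simp
    · exact Or.inr (abs_of_nonneg (by omega))
    · rw [abs_neg]; exact Or.inr (abs_of_nonneg (by omega))
  have hαbd : ∀ j, |α j| ≤ m := fun j => by rcases habsα j with h | h <;> omega
  have hkey := hkey_lemma m hm2 α γ hα hγ
  have hγ01 : ∀ j, γ j = 0 ∨ γ j = m := fun j => ((mem_inter_iff_arith m (α j) (γ j)).mp (hγ j).1).1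
  have hγbd : ∀ j, |γ j| ≤ m := fun j => abs_le.mpr (by rcases hγ01 j with h | h <;> omega)
  ext x
  simp only [Set.mem_inter_iff, Set.mem_setOf_eq]
  constructor
  · rintro ⟨⟨d, hd, rfl⟩, hx2⟩
    rw [Set.mem_add] at hx2
    obtain ⟨w, hw, t, ht, hwt⟩ := hx2
    rw [Set.mem_singleton_iff] at ht
    subst ht
    obtain ⟨e, he, rfl⟩ := hw
    simp only [Set.mem_insert_iff, Set.mem_singleton_iff] at hd he
    have hdbd : ∀ j, |d j| ≤ m := fun j => abs_le.mpr (by rcases hd j with h | h <;> omega)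
    have hebd : ∀ j, |e j| ≤ m := fun j => abs_le.mpr (by rcases he j with h | h <;> omega)
    have hβ : ∀ j, d j - e j = α j := by
      apply huniq
      · intro j
        simp only [Set.mem_insert_iff, Set.mem_singleton_iff]
        rcases hd j with h | h <;> rcases he j with h2 | h2 <;> omega
      · rw [piSum_sub hb d e m hdbd hebd, ← hbdef] at *
        rw [← hwt]
        ring
    refine ⟨fun j => d j - γ j, ?_, ?_⟩
    · intro j
      exact (hkey j (d j)).mp ⟨hd j, by rw [show d j - α j = e j by have := hβ j; omega]; exact he j⟩
    · have hcbd : ∀ j, |d j - γ j| ≤ m := fun j =>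
        abs_le.mpr (by rcases hd j with h | h <;> rcases hγ01 j with h2 | h2 <;> omega)
      rw [← piSum_add hb γ (fun j => d j - γ j) m hγbd hcbd]
      congr 1
      funext j
      ring
  · rintro ⟨c, hc, rfl⟩
    have hcbd : ∀ j, |c j| ≤ m := fun j =>
      abs_le.mpr (by rcases habsα j with h | h <;> rcases hc j with h2 | h2 <;> omega)
    have hd2 : ∀ j, (γ j + c j = 0 ∨ γ j + c j = m) ∧
        (γ j + c j - α j = 0 ∨ γ j + c j - α j = m) := by
      intro j
      refine (hkey j (γ j + c j)).mpr ?_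
      have := hc j
      omega
    have hdbd : ∀ j, |γ j + c j| ≤ m := fun j => abs_le.mpr (by rcases (hd2 j).1 with h | h <;> omega)
    have hpid : piSum b γ + piSum b c = piSum b (fun j => γ j + c j) :=
      (piSum_add hb γ c m hγbd hcbd).symm
    constructor
    · exact ⟨fun j => γ j + c j, fun j => by
        simp only [Set.mem_insert_iff, Set.mem_singleton_iff]; exact (hd2 j).1, hpid⟩
    · rw [Set.mem_add]
      refine ⟨piSum b (fun j => γ j + c j - α j), ⟨fun j => γ j + c j - α j, fun j => by
        simp only [Set.mem_insert_iff, Set.mem_singleton_iff]; exact (hd2 j).2, rfl⟩,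
        piSum b α, rfl, ?_⟩
      have hed : ∀ j, |γ j + c j - α j| ≤ m := fun j =>
        abs_le.mpr (by rcases (hd2 j).2 with h | h <;> omega)
      rw [show (fun j => γ j + c j - α j) = fun j => (γ j + c j) - α j from rfl,
        piSum_sub hb (fun j => γ j + c j) α m hdbd hαbd, hpid]
      ring
lemma key_eq {b : ℂ} (hb : 1 < ‖b‖) (m : ℤ) (p : ℕ) (hp : 1 ≤ p)
    (y z : Fin p → ℤ) (c'' c : ℕ → ℤ)
    (hy : ∀ ℓ, |y ℓ| ≤ m) (hz : ∀ ℓ, |z ℓ| ≤ m) (hc'' : ∀ j, |c'' j| ≤ m)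
    (hc1 : ∀ (j : ℕ) (h : j < p), c j = y ⟨j, h⟩)
    (hc2 : ∀ (j : ℕ) (h : j < p), c (j + p) = c'' j + z ⟨j, h⟩)
    (hc3 : ∀ j : ℕ, p ≤ j → c (j + p) = c'' j) :
    piSum b c = b ^ (-(p : ℤ)) * (piSum b c'' +
      ∑ ℓ : Fin p, ((y ℓ : ℂ) * b ^ ((p : ℤ) - ((ℓ : ℤ) + 1)) +
        (z ℓ : ℂ) * b ^ (-((ℓ : ℤ) + 1)))) := by
  have hb0 : b ≠ 0 := by intro h; rw [h, norm_zero] at hb; linarith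
  have hm0 : 0 ≤ m := le_trans (abs_nonneg _) (hy ⟨0, hp⟩)
  set zext : ℕ → ℤ := fun j => if h : j < p then z ⟨j, h⟩ else 0 with hzext
  have hzextbd : ∀ j, |zext j| ≤ m := by
    intro j
    by_cases h : j < p
    · simp only [hzext, dif_pos h]; exact hz _
    · simp only [hzext, dif_neg h, abs_zero]; exact hm0
  have hcbd : ∀ j, |c j| ≤ m + m := by
    intro j
    by_cases h : j < p
    · rw [hc1 j h]; have := hy ⟨j, h⟩; omega
    · have hj : j = (j - p) + p := by omega
      by_cases h2 : j - p < p
      · rw [hj, hc2 _ h2]; have := hc'' (j - p); have := hz ⟨j - p, h2⟩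
        have := abs_add_le (c'' (j-p)) (z ⟨j - p, h2⟩); omega
      · rw [hj, hc3 _ (by omega)]; have := hc'' (j - p); omega
  have hshift := piSum_shift hb c (m + m) hcbd p
  have htailf : (fun j => c (j + p)) = fun j => c'' j + zext j := by
    funext j
    by_cases h : j < p
    · rw [hc2 j h]; simp only [hzext, dif_pos h]
    · rw [hc3 j (by omega)]; simp only [hzext, dif_neg h, add_zero]
  have htail : piSum b (fun j => c (j + p)) = piSum b c'' + piSum b zext := by
    rw [htailf]; exact piSum_add hb c'' zext m hc'' hzextbd
  have hfin : piSum b zext = ∑ j ∈ Finset.range p, (zext j : ℂ) * b ^ (-((j : ℤ) + 1)) :=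
    piSum_finsupp zext p (fun j hj => by simp only [hzext, dif_neg (by omega : ¬ j < p)])
  have hzsum : ∑ j ∈ Finset.range p, (zext j : ℂ) * b ^ (-((j : ℤ) + 1))
      = ∑ ℓ : Fin p, (z ℓ : ℂ) * b ^ (-((ℓ : ℤ) + 1)) := by
    rw [← Fin.sum_univ_eq_sum_range (fun j => ((zext j : ℂ)) * b ^ (-((j : ℤ) + 1))) p]
    apply Finset.sum_congr rfl
    intro ℓ _
    simp only [hzext, dif_pos ℓ.isLt, Fin.eta]
  have hysum : ∑ j ∈ Finset.range p, (c j : ℂ) * b ^ (-((j : ℤ) + 1))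
      = ∑ ℓ : Fin p, (y ℓ : ℂ) * b ^ (-((ℓ : ℤ) + 1)) := by
    rw [← Fin.sum_univ_eq_sum_range (fun j => ((c j : ℂ)) * b ^ (-((j : ℤ) + 1))) p]
    apply Finset.sum_congr rfl
    intro ℓ _
    rw [hc1 ℓ ℓ.isLt, Fin.eta]
  have hexp : ∀ ℓ : Fin p, b ^ (-(p : ℤ)) * b ^ ((p : ℤ) - ((ℓ : ℤ) + 1)) = b ^ (-((ℓ : ℤ) + 1)) := by
    intro ℓ
    rw [← zpow_add₀ hb0]
    congr 1
    ring
  have hA : b ^ (-(p : ℤ)) * (∑ ℓ : Fin p, (y ℓ : ℂ) * b ^ ((p : ℤ) - ((ℓ : ℤ) + 1)))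
      = ∑ ℓ : Fin p, (y ℓ : ℂ) * b ^ (-((ℓ : ℤ) + 1)) := by
    rw [Finset.mul_sum]
    apply Finset.sum_congr rfl
    intro ℓ _
    rw [← hexp ℓ]
    ring
  rw [hshift, htail, hfin, hzsum, hysum, Finset.sum_add_distrib]
  linear_combination -hA

theorem stmt_17 (n : ℕ) (hn : 2 ≤ n) (m : ℤ) (hm : 2 ≤ m ∧ m ≤ (n : ℤ) ^ 2)
    (α : ℕ → ℤ) (hα : ∀ j, α j ∈ ({0, m, -m} : Set ℤ))
    (huniq : ∀ β : ℕ → ℤ, (∀ j, β j ∈ ({0, m, -m} : Set ℤ)) →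
      piSum (-(n : ℂ) + Complex.I) β = piSum (-(n : ℂ) + Complex.I) α →
      ∀ j, β j = α j)
    (γ : ℕ → ℤ)
    (hγ : ∀ j, IsLeast (({0, m} : Set ℤ) ∩ (({0, m} : Set ℤ) + {α j})) (γ j))
    (Cα : Set ℂ)
    (hCα : Cα = restrictedDigitSet n {0, m} ∩
      (restrictedDigitSet n {0, m} + {piSum (-(n : ℂ) + Complex.I) α}))
    (p : ℕ) (hp : 1 ≤ p) (a u : ℕ → ℤ) (hu : ∀ ℓ, 0 ≤ u ℓ)
    (hsep₁ : ∀ ℓ < p, m - |α ℓ| = a ℓ)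
    (hsep₂ : ∀ j, p ≤ j → m - |α j| = a (j % p) + u (j % p)) :
    Cα = ⋃ y : Fin p → ℤ, ⋃ z : Fin p → ℤ,
      ⋃ (_ : ∀ ℓ : Fin p, (y ℓ = 0 ∨ y ℓ = m) ∧ y ℓ ≤ a ℓ ∧
        (z ℓ = 0 ∨ z ℓ = m) ∧ z ℓ ≤ u ℓ),
      (fun x => (-(n : ℂ) + Complex.I) ^ (-(p : ℤ)) *
        (x + (∑ ℓ : Fin p, ((y ℓ : ℂ) * (-(n : ℂ) + Complex.I) ^ ((p : ℤ) - ((ℓ : ℤ) + 1)) +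
          (z ℓ : ℂ) * (-(n : ℂ) + Complex.I) ^ (-((ℓ : ℤ) + 1)))) -
          piSum (-(n : ℂ) + Complex.I) γ) +
        piSum (-(n : ℂ) + Complex.I) γ) '' Cα := by
  obtain ⟨hm2, hmn⟩ := hm
  rw [hCα, char_lemma n hn m hm2 α hα huniq γ hγ]
  have hb : 1 < ‖-(n : ℂ) + Complex.I‖ := norm_base n (by omega)
  set b : ℂ := -(n : ℂ) + Complex.I with hbdef
  have habsα : ∀ j, |α j| = 0 ∨ |α j| = m := by
    intro j
    have := hα j
    simp only [Set.mem_insert_iff, Set.mem_singleton_iff] at this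
    rcases this with h | h | h <;> rw [h]
    · simp
    · exact Or.inr (abs_of_nonneg (by omega))
    · rw [abs_neg]; exact Or.inr (abs_of_nonneg (by omega))
  have hs0m : ∀ j, m - |α j| = 0 ∨ m - |α j| = m := fun j => by
    rcases habsα j with h | h <;> omega
  have hsp : ∀ ℓ, ℓ < p → m - |α (p + ℓ)| = a ℓ + u ℓ := by
    intro ℓ h
    have h2 := hsep₂ (p + ℓ) (by omega)
    rwa [Nat.add_mod_left, Nat.mod_eq_of_lt h] at h2
  have hper : ∀ j, p ≤ j → m - |α (p + j)| = m - |α j| := by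
    intro j hj
    rw [hsep₂ (p + j) (by omega), hsep₂ j hj, Nat.add_mod_left]
  ext x
  simp only [Set.mem_setOf_eq, Set.mem_iUnion, Set.mem_image]
  constructor
  · rintro ⟨c, hc, rfl⟩
    set y : Fin p → ℤ := fun ℓ => c ℓ with hy_def
    set z : Fin p → ℤ := fun ℓ => if a ℓ = 0 then c (p + ℓ) else 0 with hz_def
    set c'' : ℕ → ℤ := fun j =>
      if h : j < p then c (p + j) - (if a j = 0 then c (p + j) else 0) else c (p + j)
      with hc''_def
    have hdig : ∀ j, c'' j = 0 ∨ c'' j = m - |α j| := by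
      intro j
      by_cases h : j < p
      · simp only [hc''_def, dif_pos h]
        split_ifs with ha0
        · omega
        · have h1 := hc (p + j)
          have h2 := hsp j h
          have h3 := hsep₁ j h
          have h4 := hs0m j
          have h5 := hs0m (p + j)
          have h6 := hu j
          omega
      · simp only [hc''_def, dif_neg h]
        have h1 := hc (p + j)
        have h2 := hper j (by omega)
        omega
    have hybd : ∀ ℓ, |y ℓ| ≤ m := by
      intro ℓ
      simp only [hy_def]
      have h1 := hc ℓ
      have h2 := hs0m (ℓ : ℕ)
      exact abs_le.mpr (by omega)
    have hzbd : ∀ ℓ, |z ℓ| ≤ m := by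
      intro ℓ
      simp only [hz_def]
      split_ifs with h
      · have h1 := hc (p + ℓ)
        have h2 := hs0m (p + (ℓ : ℕ))
        exact abs_le.mpr (by omega)
      · simp; omega
    have hc''bd : ∀ j, |c'' j| ≤ m := by
      intro j
      have h1 := hdig j
      have h2 := hs0m j
      exact abs_le.mpr (by omega)
    have hc1 : ∀ (j : ℕ) (h : j < p), c j = y ⟨j, h⟩ := fun j h => rfl
    have hc2 : ∀ (j : ℕ) (h : j < p), c (j + p) = c'' j + z ⟨j, h⟩ := by
      intro j h
      simp only [hc''_def, hz_def, dif_pos h]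
      rw [Nat.add_comm j p]
      omega
    have hc3 : ∀ j : ℕ, p ≤ j → c (j + p) = c'' j := by
      intro j hj
      simp only [hc''_def, dif_neg (by omega : ¬ j < p)]
      rw [Nat.add_comm j p]
    refine ⟨y, z, ?_, piSum b γ + piSum b c'', ⟨c'', hdig, rfl⟩, ?_⟩
    · intro ℓ
      have h1 := hc (ℓ : ℕ)
      have h2 := hs0m (ℓ : ℕ)
      have h3 := hsep₁ ℓ ℓ.isLt
      have h4 := hc (p + (ℓ : ℕ))
      have h5 := hs0m (p + (ℓ : ℕ))
      have h6 := hsp ℓ ℓ.isLt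
      have h7 := hu (ℓ : ℕ)
      simp only [hy_def, hz_def]
      split_ifs with h <;> omega
    · rw [key_eq hb m p hp y z c'' c hybd hzbd hc''bd hc1 hc2 hc3]
      ring
  · rintro ⟨y, z, hP, x', ⟨c'', hdig'', rfl⟩, rfl⟩
    set c : ℕ → ℤ := fun j =>
      if h : j < p then y ⟨j, h⟩
      else (if h2 : j - p < p then c'' (j - p) + z ⟨j - p, h2⟩ else c'' (j - p))
      with hc_def
    have hc1 : ∀ (j : ℕ) (h : j < p), c j = y ⟨j, h⟩ := by
      intro j h
      simp only [hc_def, dif_pos h]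
    have hc2 : ∀ (j : ℕ) (h : j < p), c (j + p) = c'' j + z ⟨j, h⟩ := by
      intro j h
      simp only [hc_def, dif_neg (by omega : ¬ j + p < p), Nat.add_sub_cancel, dif_pos h]
    have hc3 : ∀ j : ℕ, p ≤ j → c (j + p) = c'' j := by
      intro j hj
      simp only [hc_def, dif_neg (by omega : ¬ j + p < p), Nat.add_sub_cancel,
        dif_neg (by omega : ¬ j < p)]
    have hybd : ∀ ℓ, |y ℓ| ≤ m := fun ℓ => abs_le.mpr (by have := hP ℓ; omega)
    have hzbd : ∀ ℓ, |z ℓ| ≤ m := fun ℓ => abs_le.mpr (by have := hP ℓ; omega)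
    have hc''bd : ∀ j, |c'' j| ≤ m := by
      intro j
      have h1 := hdig'' j
      have h2 := hs0m j
      exact abs_le.mpr (by omega)
    have hcdig : ∀ j, c j = 0 ∨ c j = m - |α j| := by
      intro j
      by_cases h : j < p
      · rw [hc1 j h]
        have h1 := hP ⟨j, h⟩
        have h2 := hsep₁ j h
        have h3 := hs0m j
        simp only at h1
        omega
      · by_cases h2 : j - p < p
        · have hj : p + (j - p) = j := by omega
          simp only [hc_def, dif_neg h, dif_pos h2]
          have h1 := hdig'' (j - p)
          have h3 := hsep₁ (j - p) h2
          have h4 := hs0m (j - p)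
          have h5 := hP ⟨j - p, h2⟩
          have h6 := hsp (j - p) h2
          rw [hj] at h6
          have h7 := hs0m j
          have h8 := hu (j - p)
          simp only at h5
          omega
        · have hj : p + (j - p) = j := by omega
          simp only [hc_def, dif_neg h, dif_neg h2]
          have h1 := hdig'' (j - p)
          have h2' := hper (j - p) (by omega)
          rw [hj] at h2'
          omega
    refine ⟨c, hcdig, ?_⟩
    rw [key_eq hb m p hp y z c'' c hybd hzbd hc''bd hc1 hc2 hc3]
    ring
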